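/- Fix Δ ∈ (0,1) and suppose the common density g of the overlaps satisfies g(1−x) = c·x^β + O(x^{β+δ}) as x → 0⁺ for some constants c, δ, β > 0. Then there exist positive constants c₁, c₂ (independent of n) such that lim_{n→∞} P( c₁ < N_Δ / (|log Δ|·n) < c₂ ) = 1. -/

import Mathlib

open MeasureTheory ProbabilityTheory Filter

namespace MLD


variable {n : ℕ}

noncomputable def mtx (n : ℕ) (b : Fin n → ℝ) : Matrix (Fin n) (Fin n) ℝ :=
  Matrix.of fun i j => if i = j then b i else (1 - b i) / ((n : ℝ) - 1)

noncomputable def pvec (n : ℕ) (b : Fin n → ℝ) (N : ℕ) : Fin n → ℝ :=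
  Matrix.vecMul (fun _ => 1 / (n : ℝ)) (mtx n b ^ N)

lemma pvec_zero (b : Fin n → ℝ) (j : Fin n) : pvec n b 0 j = 1 / (n : ℝ) := by simp [pvec]

lemma pvec_succ (b : Fin n → ℝ) (N : ℕ) (j : Fin n) :
    pvec n b (N + 1) j = ∑ i, pvec n b N i * mtx n b i j := by
  have : mtx n b ^ (N + 1) = mtx n b ^ N * mtx n b := pow_succ _ _
  simp only [pvec, this, ← Matrix.vecMul_vecMul]
  rfl

lemma card_erase (i : Fin n) : (Finset.univ.erase i).card = n - 1 := by
  rw [Finset.card_erase_of_mem (Finset.mem_univ i), Finset.card_univ, Fintype.card_fin]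

section
variable (hn : 2 ≤ n) (b : Fin n → ℝ) (z : Fin n)
  (hbnn : ∀ i, 0 ≤ b i) (hble : ∀ i, b i ≤ 1) (hbz : b z = 1)
  (hblt : ∀ i, i ≠ z → b i < 1)

include hn in
lemma nposR : (0:ℝ) < (n:ℝ) - 1 := by
  have : (2 : ℝ) ≤ (n : ℝ) := by exact_mod_cast hn
  linarith

include hn in
lemma cast_sub_one : ((n - 1 : ℕ) : ℝ) = (n : ℝ) - 1 := by
  have : 1 ≤ n := by omega
  push_cast [Nat.cast_sub this]
  ring

include hn hbnn hble in
lemma mtx_nonneg (i j : Fin n) : 0 ≤ mtx n b i j := by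
  by_cases h : i = j
  · simp [mtx, h]; exact hbnn j
  · simp only [mtx, Matrix.of_apply, if_neg h]
    exact div_nonneg (by linarith [hble i]) (le_of_lt (nposR hn))

include hn hbnn hble in
lemma pvec_nonneg (N : ℕ) (j : Fin n) : 0 ≤ pvec n b N j := by
  induction N generalizing j with
  | zero => rw [pvec_zero]; positivity
  | succ N ih =>
    rw [pvec_succ]
    exact Finset.sum_nonneg fun i _ => mul_nonneg (ih i) (mtx_nonneg hn b hbnn hble i j)

include hn in
lemma rowsum (i : Fin n) : ∑ j, mtx n b i j = 1 := by
  have h1 : ∑ j ∈ Finset.univ.erase i, mtx n b i j + mtx n b i i = ∑ j, mtx n b i j :=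
    Finset.sum_erase_add _ _ (Finset.mem_univ i)
  have h2 : ∑ j ∈ Finset.univ.erase i, mtx n b i j
      = ∑ j ∈ Finset.univ.erase i, (1 - b i) / ((n : ℝ) - 1) := by
    apply Finset.sum_congr rfl
    intro j hj
    have : i ≠ j := fun h => (Finset.ne_of_mem_erase hj) h.symm
    simp [mtx, this]
  have h3 : mtx n b i i = b i := by simp [mtx]
  have hne : (n : ℝ) - 1 ≠ 0 := ne_of_gt (nposR hn)
  rw [← h1, h2, h3, Finset.sum_const, card_erase, nsmul_eq_mul, cast_sub_one hn]
  field_simp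
  ring

include hn in
lemma sum_pvec (N : ℕ) : ∑ j, pvec n b N j = 1 := by
  induction N with
  | zero =>
    have hne : (n : ℝ) ≠ 0 := by
      have : (2:ℝ) ≤ (n:ℝ) := by exact_mod_cast hn
      linarith
    simp only [pvec_zero, Finset.sum_const, Finset.card_univ, Fintype.card_fin, nsmul_eq_mul]
    field_simp
  | succ N ih =>
    simp only [pvec_succ]
    rw [Finset.sum_comm]
    calc ∑ i, ∑ j, pvec n b N i * mtx n b i j
        = ∑ i, pvec n b N i * ∑ j, mtx n b i j := by
          simp [Finset.mul_sum]
      _ = 1 := by simp only [rowsum hn b]; simpa using ih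

noncomputable def qv (n : ℕ) (b : Fin n → ℝ) (z : Fin n) (N : ℕ) : ℝ :=
  ∑ j ∈ Finset.univ.erase z, pvec n b N j

include hn in
lemma pvec_z (N : ℕ) : pvec n b N z = 1 - qv n b z N := by
  have := Finset.sum_erase_add Finset.univ (pvec n b N) (Finset.mem_univ z)
  have h2 := sum_pvec hn b N
  simp only [qv]; linarith [this.trans h2]

include hn in
lemma qv_zero : qv n b z 0 = 1 - 1 / (n:ℝ) := by
  have := pvec_z hn b z 0
  rw [pvec_zero] at this
  linarith

include hn hbz in
lemma qv_succ (N : ℕ) :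
    qv n b z (N + 1)
      = ∑ i ∈ Finset.univ.erase z, pvec n b N i * (1 - (1 - b i) / ((n:ℝ) - 1)) := by
  have herase : ∀ i : Fin n, ∑ j ∈ Finset.univ.erase z, mtx n b i j = 1 - mtx n b i z := by
    intro i
    have := Finset.sum_erase_add Finset.univ (mtx n b i) (Finset.mem_univ z)
    rw [rowsum hn b i] at this
    linarith
  simp only [qv, pvec_succ]
  rw [Finset.sum_comm]
  have : ∀ i : Fin n, ∑ j ∈ Finset.univ.erase z, pvec n b N i * mtx n b i j
      = pvec n b N i * (1 - mtx n b i z) := by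
    intro i
    rw [← Finset.mul_sum, herase i]
  simp only [this]
  rw [← Finset.sum_erase_add _ _ (Finset.mem_univ z)]
  have hz : pvec n b N z * (1 - mtx n b z z) = 0 := by
    have : mtx n b z z = b z := by simp [mtx]
    rw [this, hbz]; ring
  rw [hz, add_zero]
  apply Finset.sum_congr rfl
  intro i hi
  have hiz : i ≠ z := Finset.ne_of_mem_erase hi
  have : mtx n b i z = (1 - b i) / ((n:ℝ) - 1) := by simp [mtx, hiz]
  rw [this]

include hn hbnn hble hbz in
lemma qv_nonneg (N : ℕ) : 0 ≤ qv n b z N :=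
  Finset.sum_nonneg fun j _ => pvec_nonneg hn b hbnn hble N j

include hn hbnn hble hbz in
lemma qv_mono (N : ℕ) : qv n b z (N + 1) ≤ qv n b z N := by
  rw [qv_succ hn b z hbz]
  calc ∑ i ∈ Finset.univ.erase z, pvec n b N i * (1 - (1 - b i) / ((n:ℝ) - 1))
      ≤ ∑ i ∈ Finset.univ.erase z, pvec n b N i * 1 := by
        apply Finset.sum_le_sum
        intro i _
        apply mul_le_mul_of_nonneg_left _ (pvec_nonneg hn b hbnn hble N i)
        have h1 : 0 ≤ (1 - b i) / ((n:ℝ) - 1) :=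
          div_nonneg (by linarith [hble i]) (le_of_lt (nposR hn))
        linarith
    _ = qv n b z N := by simp [qv]

include hn hbnn hble hbz in
lemma qv_lower (N : ℕ) :
    (1 - 1/(n:ℝ)) * (1 - 1/((n:ℝ) - 1)) ^ N ≤ qv n b z N := by
  have hr0 : (0:ℝ) ≤ 1 - 1/((n:ℝ)-1) := by
    have h1 : (1:ℝ) ≤ (n:ℝ) - 1 := by
      have : (2:ℝ) ≤ (n:ℝ) := by exact_mod_cast hn
      linarith
    have := div_le_one_of_le₀ h1 (by linarith)
    linarith
  induction N with
  | zero => rw [qv_zero hn]; simp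
  | succ N ih =>
    rw [qv_succ hn b z hbz, pow_succ]
    calc (1 - 1/(n:ℝ)) * ((1 - 1/((n:ℝ)-1)) ^ N * (1 - 1/((n:ℝ)-1)))
        = ((1 - 1/(n:ℝ)) * (1 - 1/((n:ℝ)-1)) ^ N) * (1 - 1/((n:ℝ)-1)) := by ring
      _ ≤ qv n b z N * (1 - 1/((n:ℝ)-1)) := mul_le_mul_of_nonneg_right ih hr0
      _ = ∑ i ∈ Finset.univ.erase z, pvec n b N i * (1 - 1/((n:ℝ)-1)) := by
          rw [qv, Finset.sum_mul]
      _ ≤ ∑ i ∈ Finset.univ.erase z, pvec n b N i * (1 - (1 - b i) / ((n:ℝ) - 1)) := by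
          apply Finset.sum_le_sum
          intro i _
          apply mul_le_mul_of_nonneg_left _ (pvec_nonneg hn b hbnn hble N i)
          have h2 : (1 - b i) / ((n:ℝ) - 1) ≤ 1 / ((n:ℝ)-1) := by
            gcongr
            · exact le_of_lt (nposR hn)
            · linarith [hbnn i]
          linarith

noncomputable def Rv (n : ℕ) (b : Fin n → ℝ) (z : Fin n) : ℝ :=
  ∑ i ∈ Finset.univ.erase z, (1 - b i)⁻¹

noncomputable def hfun (n : ℕ) (b : Fin n → ℝ) (z : Fin n) : Fin n → ℝ := fun i =>
  if i = z then 0 else ((n:ℝ)-1)/((n:ℝ)*(1 - b i)) + ((n:ℝ)-1)*(Rv n b z)/(n:ℝ)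

include hble in
lemma Rv_nonneg : 0 ≤ Rv n b z := by
  apply Finset.sum_nonneg
  intro i _
  exact inv_nonneg.mpr (by linarith [hble i])

include hn hble in
lemma hfun_nonneg (i : Fin n) : 0 ≤ hfun n b z i := by
  unfold hfun
  by_cases h : i = z
  · simp [h]
  · rw [if_neg h]
    have h1 : (0:ℝ) < (n:ℝ) - 1 := nposR hn
    have h2 : (0:ℝ) ≤ 1 - b i := by linarith [hble i]
    have h3 : (0:ℝ) < (n:ℝ) := by linarith
    have h4 := Rv_nonneg b z hble
    positivity

include hn hblt in
lemma hsum : ∑ j, hfun n b z j = ((n:ℝ)-1) * Rv n b z := by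
  rw [← Finset.sum_erase_add _ _ (Finset.mem_univ z)]
  have hz : hfun n b z z = 0 := by simp [hfun]
  rw [hz, add_zero]
  have : ∀ j ∈ Finset.univ.erase z, hfun n b z j
      = (((n:ℝ)-1)/(n:ℝ)) * (1 - b j)⁻¹ + ((n:ℝ)-1)*(Rv n b z)/(n:ℝ) := by
    intro j hj
    rw [hfun, if_neg (Finset.ne_of_mem_erase hj)]
    have h2 : (1:ℝ) - b j ≠ 0 := by
      have := hblt j (Finset.ne_of_mem_erase hj); linarith
    field_simp
  rw [Finset.sum_congr rfl this, Finset.sum_add_distrib, ← Finset.mul_sum, ← Rv,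
    Finset.sum_const, card_erase, nsmul_eq_mul, cast_sub_one hn]
  have h3 : (0:ℝ) < (n:ℝ) := by
    have : (2:ℝ) ≤ (n:ℝ) := by exact_mod_cast hn
    linarith
  field_simp
  ring

include hn hbz hblt in
lemma key_eq (i : Fin n) :
    ∑ j, mtx n b i j * hfun n b z j = hfun n b z i - (if i = z then 0 else 1) := by
  have hz0 : hfun n b z z = 0 := by simp [hfun]
  have hsplit : ∑ j, mtx n b i j * hfun n b z j
      = b i * hfun n b z i + ((1 - b i)/((n:ℝ)-1)) * (((n:ℝ)-1) * Rv n b z - hfun n b z i) := by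
    rw [← Finset.sum_erase_add _ _ (Finset.mem_univ i)]
    have hii : mtx n b i i = b i := by simp [mtx]
    have hoff : ∀ j ∈ Finset.univ.erase i, mtx n b i j * hfun n b z j
        = ((1 - b i)/((n:ℝ)-1)) * hfun n b z j := by
      intro j hj
      have : i ≠ j := fun h => (Finset.ne_of_mem_erase hj) h.symm
      rw [mtx]; simp [this]
    rw [Finset.sum_congr rfl hoff, ← Finset.mul_sum, hii]
    have herase : ∑ j ∈ Finset.univ.erase i, hfun n b z j
        = ((n:ℝ)-1) * Rv n b z - hfun n b z i := by
      have := Finset.sum_erase_add _ (hfun n b z) (Finset.mem_univ i)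
      rw [hsum hn b z hblt] at this
      linarith
    rw [herase]; ring
  rw [hsplit]
  by_cases h : i = z
  · subst h
    rw [hz0, hbz, if_pos rfl]
    ring
  · rw [if_neg h, hfun, if_neg h]
    have ht : (0:ℝ) < 1 - b i := by linarith [hblt i h]
    have h1 : (0:ℝ) < (n:ℝ) - 1 := nposR hn
    have h3 : (0:ℝ) < (n:ℝ) := by linarith
    field_simp
    ring

noncomputable def Phi (n : ℕ) (b : Fin n → ℝ) (z : Fin n) (N : ℕ) : ℝ :=
  ∑ j, pvec n b N j * hfun n b z j

include hn hbz hblt in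
lemma Phi_succ (N : ℕ) : Phi n b z (N + 1) = Phi n b z N - qv n b z N := by
  have h1 : Phi n b z (N+1) = ∑ i, pvec n b N i * ∑ j, mtx n b i j * hfun n b z j := by
    rw [Phi]
    simp only [pvec_succ, Finset.sum_mul]
    rw [Finset.sum_comm]
    congr 1; ext i
    rw [Finset.mul_sum]
    congr 1; ext j
    ring
  rw [h1]
  simp only [key_eq hn b z hbz hblt]
  have h2 : ∑ i, pvec n b N i * (hfun n b z i - if i = z then 0 else 1)
      = Phi n b z N - ∑ i, pvec n b N i * (if i = z then 0 else 1) := by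
    rw [Phi, ← Finset.sum_sub_distrib]
    congr 1; ext i
    ring
  rw [h2]
  congr 1
  rw [qv, ← Finset.sum_erase_add _ _ (Finset.mem_univ z), if_pos rfl]
  have : ∀ i ∈ Finset.univ.erase z, pvec n b N i * (if i = z then 0 else 1) = pvec n b N i := by
    intro i hi
    rw [if_neg (Finset.ne_of_mem_erase hi)]
    ring
  rw [Finset.sum_congr rfl this]
  ring

include hn hbnn hble in
lemma Phi_nonneg (N : ℕ) : 0 ≤ Phi n b z N :=
  Finset.sum_nonneg fun j _ =>
    mul_nonneg (pvec_nonneg hn b hbnn hble N j) (hfun_nonneg hn b z hble j)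

include hn hblt in
lemma Phi_zero_le : Phi n b z 0 ≤ Rv n b z := by
  have h3 : (0:ℝ) < (n:ℝ) := by
    have : (2:ℝ) ≤ (n:ℝ) := by exact_mod_cast hn
    linarith
  have : Phi n b z 0 = (1/(n:ℝ)) * (((n:ℝ)-1) * Rv n b z) := by
    rw [Phi, ← hsum hn b z hblt, Finset.mul_sum]
    congr 1; ext j
    rw [pvec_zero]
  rw [this]
  have hR : 0 ≤ Rv n b z := by
    apply Finset.sum_nonneg
    intro i hi
    have := hblt i (Finset.ne_of_mem_erase hi)
    have : (0:ℝ) < 1 - b i := by linarith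
    positivity
  have h4 : (1/(n:ℝ)) * (((n:ℝ)-1) * Rv n b z) = Rv n b z * (((n:ℝ)-1)/(n:ℝ)) := by ring
  rw [h4]
  have h5 : ((n:ℝ)-1)/(n:ℝ) ≤ 1 := by
    rw [div_le_one h3]; linarith
  nlinarith

include hn hbnn hble hbz hblt in
lemma sum_qv_le (M : ℕ) : ∑ N ∈ Finset.range M, qv n b z N ≤ Rv n b z := by
  have key : ∀ M, ∑ N ∈ Finset.range M, qv n b z N = Phi n b z 0 - Phi n b z M := by
    intro M
    induction M with
    | zero => simp
    | succ M ih =>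
      rw [Finset.sum_range_succ, ih, Phi_succ hn b z hbz hblt]
      ring
  rw [key]
  have := Phi_nonneg hn b z hbnn hble M
  linarith [Phi_zero_le hn b z hblt]

include hn hbnn hble hbz hblt in
lemma qv_le (M : ℕ) : qv n b z M ≤ Rv n b z / (M + 1) := by
  have hmono : ∀ N K, N ≤ K → qv n b z K ≤ qv n b z N := by
    intro N K h
    induction K with
    | zero =>
      have : N = 0 := by omega
      subst this
      exact le_refl _
    | succ K ih =>
      rcases Nat.lt_or_ge N (K+1) with h'|h'
      · exact le_trans (qv_mono hn b z hbnn hble hbz K) (ih (by omega))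
      · have : N = K + 1 := by omega
        subst this; exact le_refl _
  have h1 : ((M:ℝ)+1) * qv n b z M ≤ ∑ N ∈ Finset.range (M+1), qv n b z N := by
    calc ((M:ℝ)+1) * qv n b z M = ∑ _N ∈ Finset.range (M+1), qv n b z M := by
          rw [Finset.sum_const, Finset.card_range, nsmul_eq_mul]; push_cast; ring
      _ ≤ _ := Finset.sum_le_sum fun N hN => hmono N M (by simpa using Nat.lt_succ_iff.mp (Finset.mem_range.mp hN))
  have h2 := sum_qv_le hn b z hbnn hble hbz hblt (M+1)
  have h3 : (0:ℝ) < (M:ℝ) + 1 := by positivity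
  rw [le_div_iff₀ h3]
  calc qv n b z M * ((M:ℝ)+1) = ((M:ℝ)+1) * qv n b z M := by ring
    _ ≤ Rv n b z := le_trans h1 h2

end




lemma exists_dyadic {x : ℝ} (hx : 1 ≤ x) : ∃ k : ℕ, (2:ℝ)^k ≤ x ∧ x < 2^(k+1) := by
  have hex : ∃ m : ℕ, x < 2^(m+1) := by
    obtain ⟨m, hm⟩ := pow_unbounded_of_one_lt x (by norm_num : (1:ℝ) < 2)
    exact ⟨m, lt_trans hm (by apply pow_lt_pow_right₀ <;> norm_num)⟩
  classical
  let k := Nat.find hex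
  refine ⟨k, ?_, Nat.find_spec hex⟩
  rcases Nat.eq_zero_or_pos k with h0 | h0
  · rw [h0]; simpa using hx
  · have := Nat.find_min hex (m := k - 1) (by omega)
    push_neg at this
    have hk : k - 1 + 1 = k := by omega
    rwa [hk] at this

lemma lintegral_inv_one_sub_lt_top (ν : Measure ℝ) [IsProbabilityMeasure ν] (g : ℝ → ℝ)
    (β c' η : ℝ) (hβ : 0 < β) (hc' : 0 ≤ c') (hη : 0 < η) (hη1 : η ≤ 1)
    (hν : ∀ s : Set ℝ, MeasurableSet s → ν s = ∫⁻ t in s, ENNReal.ofReal (g t) ∂volume)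
    (hgb : ∀ t ∈ Set.Ioo (0:ℝ) η, g (1 - t) ≤ c' * t ^ β) :
    ∫⁻ t, ENNReal.ofReal ((1 - t)⁻¹) ∂ν < ⊤ := by
  set F : ℝ → ENNReal := fun t => ENNReal.ofReal ((1 - t)⁻¹) with hF
  -- tail estimate
  have tail : ∀ s : ℝ, 0 < s → s ≤ η → ν (Set.Ioo (1-s) 1) ≤ ENNReal.ofReal (c' * s ^ β * s) := by
    intro s hs hsη
    rw [hν _ measurableSet_Ioo]
    calc ∫⁻ t in Set.Ioo (1-s) 1, ENNReal.ofReal (g t) ∂volume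
        ≤ ∫⁻ _t in Set.Ioo (1-s) 1, ENNReal.ofReal (c' * s ^ β) ∂volume := by
          apply setLIntegral_mono' measurableSet_Ioo
          intro t ht
          apply ENNReal.ofReal_le_ofReal
          have hu : (0:ℝ) < 1 - t ∧ 1 - t < s := ⟨by linarith [ht.2], by linarith [ht.1]⟩
          have h1 : g (1 - (1 - t)) ≤ c' * (1 - t) ^ β :=
            hgb _ ⟨hu.1, lt_of_lt_of_le hu.2 hsη⟩
          have h2 : (1 - t) ^ β ≤ s ^ β :=
            Real.rpow_le_rpow (le_of_lt hu.1) (le_of_lt hu.2) (le_of_lt hβ)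
          have h3 : g t ≤ c' * (1-t) ^ β := by simpa using h1
          nlinarith
      _ = ENNReal.ofReal (c' * s ^ β) * ENNReal.ofReal s := by
          rw [setLIntegral_const, Real.volume_Ioo]
          congr 1
          congr 1
          ring
      _ ≤ ENNReal.ofReal (c' * s ^ β * s) :=
          le_of_eq (ENNReal.ofReal_mul (by positivity)).symm
  have hsing : ∀ x : ℝ, ν {x} = 0 := by
    intro x
    rw [hν _ (measurableSet_singleton x)]
    exact setLIntegral_measure_zero _ _ (Real.volume_singleton)
  set A : ℕ → Set ℝ := fun k => Set.Icc (1 - η/2^k) (1 - η/2^(k+1)) with hA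
  have hcover : Set.Ioo (1-η) 1 ⊆ ⋃ k, A k := by
    intro t ht
    have hu1 : 0 < 1 - t := by linarith [ht.2]
    have hu2 : 1 - t < η := by linarith [ht.1]
    have hx : 1 ≤ η / (1 - t) := (one_le_div hu1).mpr (le_of_lt hu2)
    obtain ⟨k, hk1, hk2⟩ := exists_dyadic hx
    have h2k : (0:ℝ) < 2^k := by positivity
    have h2k1 : (0:ℝ) < 2^(k+1) := by positivity
    refine Set.mem_iUnion.mpr ⟨k, ?_, ?_⟩
    · have : (1 - t) * 2^k ≤ η := by
        rw [le_div_iff₀ hu1] at hk1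
        linarith
      have : 1 - t ≤ η / 2^k := (le_div_iff₀ h2k).mpr this
      linarith
    · have : η < (1 - t) * 2^(k+1) := by
        rw [div_lt_iff₀ hu1] at hk2
        linarith
      have : η / 2^(k+1) ≤ 1 - t := le_of_lt ((div_lt_iff₀ h2k1).mpr this)
      linarith
  have hmeasA : ∀ k, ν (A k) ≤ ENNReal.ofReal (c' * (η/2^k) ^ β * (η/2^k)) := by
    intro k
    have h2k : (0:ℝ) < 2^k := by positivity
    have hsk : 0 < η/2^k := by positivity
    have hskη : η/2^k ≤ η := by
      apply div_le_self (le_of_lt hη)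
      exact one_le_pow₀ (by norm_num)
    have hsub : A k ⊆ {1 - η/2^k} ∪ Set.Ioo (1 - η/2^k) 1 := by
      intro t ht
      rcases eq_or_lt_of_le ht.1 with h | h
      · exact Set.mem_union_left _ (by simp [h.symm])
      · refine Set.mem_union_right _ ⟨h, ?_⟩
        have : (0:ℝ) < η/2^(k+1) := by positivity
        have := ht.2
        linarith
    calc ν (A k) ≤ ν ({1 - η/2^k} ∪ Set.Ioo (1 - η/2^k) 1) := measure_mono hsub
      _ ≤ ν {1 - η/2^k} + ν (Set.Ioo (1 - η/2^k) 1) := measure_union_le _ _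
      _ ≤ ENNReal.ofReal (c' * (η/2^k) ^ β * (η/2^k)) := by
          rw [hsing]
          rw [zero_add]
          exact tail _ hsk hskη
  have boundF : ∀ k : ℕ, ∀ t ∈ A k, F t ≤ ENNReal.ofReal ((2:ℝ)^(k+1)/η) := by
    intro k t ht
    have h2k1 : (0:ℝ) < 2^(k+1) := by positivity
    have h1 : 0 < η / 2^(k+1) := by positivity
    have h2 : η/2^(k+1) ≤ 1 - t := by linarith [ht.2]
    apply ENNReal.ofReal_le_ofReal
    calc (1-t)⁻¹ ≤ (η/2^(k+1))⁻¹ := by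
          apply inv_anti₀ h1 h2
      _ = (2:ℝ)^(k+1)/η := by
          field_simp
  have bound_k : ∀ k : ℕ, ∫⁻ t in A k, F t ∂ν
      ≤ ENNReal.ofReal ((2:ℝ)^(k+1)/η) * ENNReal.ofReal (c' * (η/2^k) ^ β * (η/2^k)) := by
    intro k
    calc ∫⁻ t in A k, F t ∂ν ≤ ∫⁻ _t in A k, ENNReal.ofReal ((2:ℝ)^(k+1)/η) ∂ν :=
          setLIntegral_mono' measurableSet_Icc (boundF k)
      _ = ENNReal.ofReal ((2:ℝ)^(k+1)/η) * ν (A k) := setLIntegral_const _ _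
      _ ≤ _ := mul_le_mul_right (hmeasA k) _
  have harith : ∀ k : ℕ, (2:ℝ)^(k+1)/η * (c' * (η/2^k) ^ β * (η/2^k))
      = (2*c'*η^β) * ((2:ℝ)^(-β))^k := by
    intro k
    have h2k : (0:ℝ) < (2:ℝ)^k := by positivity
    have hkey : ((2:ℝ)^(k:ℕ))^β = ((2:ℝ)^β)^(k:ℕ) := by
      rw [← Real.rpow_natCast (2:ℝ) k, ← Real.rpow_mul (by norm_num), mul_comm,
        Real.rpow_mul (by norm_num), Real.rpow_natCast]
    have hneg : ((2:ℝ)^(-β))^(k:ℕ) = (((2:ℝ)^(k:ℕ))^β)⁻¹ := by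
      rw [Real.rpow_neg (by norm_num), inv_pow, hkey]
    rw [Real.div_rpow (le_of_lt hη) (le_of_lt h2k), hneg]
    have hu : (0:ℝ) < ((2:ℝ)^(k:ℕ))^β := Real.rpow_pos_of_pos h2k β
    have hηβ : (0:ℝ) < η ^ β := Real.rpow_pos_of_pos hη β
    field_simp
    ring
  have geom : ∑' k : ℕ, ∫⁻ t in A k, F t ∂ν < ⊤ := by
    have hr : ENNReal.ofReal ((2:ℝ)^(-β)) < 1 := by
      rw [← ENNReal.ofReal_one]
      apply ENNReal.ofReal_lt_ofReal_iff_of_nonneg (by positivity) |>.mpr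
      exact Real.rpow_lt_one_of_one_lt_of_neg (by norm_num) (by linarith)
    have hsum : ∑' k : ℕ, ∫⁻ t in A k, F t ∂ν
        ≤ ∑' k : ℕ, ENNReal.ofReal (2*c'*η^β) * (ENNReal.ofReal ((2:ℝ)^(-β)))^k := by
      apply ENNReal.tsum_le_tsum
      intro k
      calc ∫⁻ t in A k, F t ∂ν
          ≤ ENNReal.ofReal ((2:ℝ)^(k+1)/η) * ENNReal.ofReal (c' * (η/2^k) ^ β * (η/2^k)) :=
            bound_k k
        _ = ENNReal.ofReal ((2:ℝ)^(k+1)/η * (c' * (η/2^k) ^ β * (η/2^k))) := by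
            rw [← ENNReal.ofReal_mul (by positivity)]
        _ = ENNReal.ofReal ((2*c'*η^β) * ((2:ℝ)^(-β))^k) := by rw [harith k]
        _ = ENNReal.ofReal (2*c'*η^β) * (ENNReal.ofReal ((2:ℝ)^(-β)))^k := by
            rw [ENNReal.ofReal_mul (by positivity), ENNReal.ofReal_pow (by positivity)]
    apply lt_of_le_of_lt hsum
    rw [ENNReal.tsum_mul_left, ENNReal.tsum_geometric]
    apply ENNReal.mul_lt_top ENNReal.ofReal_lt_top
    rw [lt_top_iff_ne_top, Ne, ENNReal.inv_eq_top]
    intro hcontra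
    rw [tsub_eq_zero_iff_le] at hcontra
    exact absurd hcontra (not_le.mpr hr)
  have hBc : ∫⁻ t in (Set.Ioo (1-η) 1)ᶜ, F t ∂ν ≤ ENNReal.ofReal (1/η) := by
    calc ∫⁻ t in (Set.Ioo (1-η) 1)ᶜ, F t ∂ν
        ≤ ∫⁻ _t in (Set.Ioo (1-η) 1)ᶜ, ENNReal.ofReal (1/η) ∂ν := by
          apply setLIntegral_mono' measurableSet_Ioo.compl
          intro t ht
          apply ENNReal.ofReal_le_ofReal
          rcases not_and_or.mp ht with h | h
          · push_neg at h
            have h1 : η ≤ 1 - t := by linarith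
            calc (1-t)⁻¹ ≤ η⁻¹ := inv_anti₀ hη h1
              _ = 1/η := (one_div η).symm
          · push_neg at h
            have : 1 - t ≤ 0 := by linarith
            have h2 : (1-t)⁻¹ ≤ 0 := inv_nonpos.mpr this
            have : (0:ℝ) ≤ 1/η := by positivity
            linarith
      _ = ENNReal.ofReal (1/η) * ν (Set.Ioo (1-η) 1)ᶜ := setLIntegral_const _ _
      _ ≤ ENNReal.ofReal (1/η) * 1 := mul_le_mul_right prob_le_one _
      _ = ENNReal.ofReal (1/η) := mul_one _
  have hsplit : ∫⁻ t, F t ∂ν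
      = ∫⁻ t in Set.Ioo (1-η) 1, F t ∂ν + ∫⁻ t in (Set.Ioo (1-η) 1)ᶜ, F t ∂ν :=
    (lintegral_add_compl F measurableSet_Ioo).symm
  rw [hsplit]
  apply ENNReal.add_lt_top.mpr
  constructor
  · calc ∫⁻ t in Set.Ioo (1-η) 1, F t ∂ν ≤ ∫⁻ t in ⋃ k, A k, F t ∂ν :=
        lintegral_mono_set hcover
      _ ≤ ∑' k, ∫⁻ t in A k, F t ∂ν := lintegral_iUnion_le _ _
      _ < ⊤ := geom
  · exact lt_of_le_of_lt hBc ENNReal.ofReal_lt_top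





lemma measure_events_tendsto_one {Ω : Type*} [MeasurableSpace Ω] (P : Measure Ω)
    [IsProbabilityMeasure P] (A : ℕ → Set Ω) (hA : ∀ n, MeasurableSet (A n))
    (hae : ∀ᵐ ω ∂P, ∀ᶠ n in atTop, ω ∈ A n) :
    Tendsto (fun n => P (A n)) atTop (nhds 1) := by
  set C : ℕ → Set Ω := fun n => ⋂ (k) (_ : n ≤ k), A k with hC
  have hmono : Monotone C := by
    intro m m' hm
    apply Set.iInter₂_mono'
    intro k hk
    exact ⟨k, le_trans hm hk, subset_rfl⟩
  have hCmeas : ∀ n, MeasurableSet (C n) := fun n =>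
    MeasurableSet.iInter fun k => MeasurableSet.iInter fun _ => hA k
  have hunion : P (⋃ n, C n) = 1 := by
    have hsub : {ω | ∀ᶠ n in atTop, ω ∈ A n} ⊆ ⋃ n, C n := by
      intro ω hω
      obtain ⟨N, hN⟩ := eventually_atTop.mp hω
      exact Set.mem_iUnion.mpr ⟨N, Set.mem_iInter₂.mpr hN⟩
    have hcompl : P ((⋃ n, C n)ᶜ) = 0 := by
      apply measure_mono_null _ (ae_iff.mp hae)
      intro ω hω
      exact fun h => hω (hsub h)
    have := prob_compl_eq_zero_iff (MeasurableSet.iUnion hCmeas) |>.mp hcompl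
    exact this
  have hlim : Tendsto (fun n => P (C n)) atTop (nhds 1) := by
    have := tendsto_measure_iUnion_atTop (μ := P) hmono
    rwa [hunion] at this
  apply tendsto_of_tendsto_of_tendsto_of_le_of_le hlim tendsto_const_nhds
  · intro n
    apply measure_mono
    intro ω hω
    exact Set.mem_iInter₂.mp hω n le_rfl
  · exact fun n => prob_le_one



end MLD

set_option maxHeartbeats 2000000 in
/-- **Convergence time of the memoryless learner, case `β > 0`.**
The overlaps `a 1, a 2, …` are i.i.d. with values in `[0,1)` and density `g` satisfying
`g(1-t) = c t^β + O(t^{β+δ})` as `t → 0⁺` with `c, δ, β > 0`.  For each `n ≥ 2`, `T n ω` is the `n × n` transition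
matrix of the memoryless learner (with `a₁ = 1` for the correct concept, indexed by `0`),
`Q n ω N` is the probability of holding the correct concept after `N` sampling events,
and `NΔ n ω` is the least `N` such that `Q n ω M ≥ 1 - Δ` for all `M ≥ N`. Then there are
constants `0 < c₁ < c₂` with `P(c₁ < NΔ/(|log Δ| n) < c₂) → 1` as `n → ∞`. -/
theorem memoryless_learner_time_beta_pos
    {Ω : Type*} [MeasurableSpace Ω] (P : Measure Ω) [IsProbabilityMeasure P]
    (a : ℕ → Ω → ℝ) (hmeas : ∀ i, Measurable (a i))
    (hindep : iIndepFun a P)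
    (hval : ∀ i ω, a i ω ∈ Set.Ico (0 : ℝ) 1)
    (g : ℝ → ℝ)
    (hpdf : ∀ i, Measure.map (a i) P = volume.withDensity (fun t => ENNReal.ofReal (g t)))
    (c δ β : ℝ) (hc : 0 < c) (hδ : 0 < δ) (hβ : 0 < β)
    (hg : (fun t => g (1 - t) - c * t ^ β) =O[nhdsWithin 0 (Set.Ioi 0)] (fun t => t ^ (β + δ)))
    (Δ : ℝ) (hΔ : 0 < Δ) (hΔ' : Δ < 1)
    (T : (n : ℕ) → Ω → Matrix (Fin n) (Fin n) ℝ)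
    (hT : ∀ n ω (i j : Fin n),
      T n ω i j =
        if i = j then (if (i : ℕ) = 0 then 1 else a (i : ℕ) ω)
        else (1 - (if (i : ℕ) = 0 then 1 else a (i : ℕ) ω)) / ((n : ℝ) - 1))
    (Q : (n : ℕ) → Ω → ℕ → ℝ)
    (hQ : ∀ n (hn : 2 ≤ n) (ω : Ω) (N : ℕ),
      Q n ω N = Matrix.vecMul (fun _ => 1 / (n : ℝ)) ((T n ω) ^ N) ⟨0, by omega⟩)
    (NΔ : ℕ → Ω → ℕ)
    (hNΔ : ∀ n ω, NΔ n ω = sInf {N : ℕ | ∀ M, N ≤ M → 1 - Δ ≤ Q n ω M}) :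
    ∃ C₁ C₂ : ℝ, 0 < C₁ ∧ 0 < C₂ ∧
      Tendsto (fun n : ℕ =>
          P {ω | C₁ < (NΔ n ω : ℝ) / (|Real.log Δ| * n) ∧
                 (NΔ n ω : ℝ) / (|Real.log Δ| * n) < C₂})
        atTop (nhds 1) := by
  classical
  -- the auxiliary i.i.d. variables 1/(1 - a i)
  set X : ℕ → Ω → ℝ := fun i ω => (1 - a i ω)⁻¹ with hX
  have hXmeas : ∀ i, Measurable (X i) := fun i => (measurable_const.sub (hmeas i)).inv
  have hapos : ∀ i ω, 0 < 1 - a i ω := by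
    intro i ω
    have := (hval i ω).2
    linarith
  have hXnn : ∀ i ω, 0 ≤ X i ω := fun i ω => le_of_lt (inv_pos.mpr (hapos i ω))
  -- bound on g near 1
  obtain ⟨η, hη, hηle, c'', hc''nn, hgb⟩ :
      ∃ η, 0 < η ∧ η ≤ 1 ∧ ∃ c'', 0 ≤ c'' ∧
        ∀ t ∈ Set.Ioo (0:ℝ) η, g (1-t) ≤ c'' * t ^ β := by
    obtain ⟨C, hC⟩ := hg.bound
    obtain ⟨η0, hη0, hsub⟩ := mem_nhdsGT_iff_exists_Ioo_subset.mp hC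
    refine ⟨min η0 1, lt_min (Set.mem_Ioi.mp hη0) one_pos, min_le_right _ _,
      c + |C|, by positivity, ?_⟩
    intro t ht
    have ht0 : 0 < t := ht.1
    have ht1 : t < 1 := lt_of_lt_of_le ht.2 (min_le_right _ _)
    have htη0 : t ∈ Set.Ioo 0 η0 := ⟨ht0, lt_of_lt_of_le ht.2 (min_le_left _ _)⟩
    have h1 := hsub htη0
    simp only [Set.mem_setOf_eq, Real.norm_eq_abs] at h1
    have h2 : |t ^ (β+δ)| = t ^ (β+δ) := abs_of_nonneg (Real.rpow_nonneg ht0.le _)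
    have h3 : t ^ (β+δ) ≤ t ^ β :=
      Real.rpow_le_rpow_of_exponent_ge ht0 ht1.le (by linarith)
    have h4 : g (1-t) - c * t ^ β ≤ |C| * t ^ β := by
      have := abs_le.mp h1
      have h5 : C * |t ^ (β+δ)| ≤ |C| * t ^ β := by
        rw [h2]
        calc C * t ^ (β+δ) ≤ |C| * t ^ (β+δ) :=
              mul_le_mul_of_nonneg_right (le_abs_self C) (Real.rpow_nonneg ht0.le _)
          _ ≤ |C| * t ^ β := mul_le_mul_of_nonneg_left h3 (abs_nonneg C)
      linarith [this.2]
    linarith [h4]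
  -- integrability of X 0
  have hint : Integrable (X 0) P := by
    refine ⟨(hXmeas 0).aestronglyMeasurable, ?_⟩
    rw [hasFiniteIntegral_iff_ofReal (Filter.Eventually.of_forall (hXnn 0))]
    calc ∫⁻ ω, ENNReal.ofReal (X 0 ω) ∂P
        = ∫⁻ t, ENNReal.ofReal ((1 - t)⁻¹) ∂(Measure.map (a 0) P) := by
          exact (lintegral_map (f := fun t => ENNReal.ofReal ((1 - t)⁻¹))
            ((measurable_const.sub measurable_id).inv.ennreal_ofReal) (hmeas 0)).symm
      _ < ⊤ := by
          have : IsProbabilityMeasure (Measure.map (a 0) P) :=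
            Measure.isProbabilityMeasure_map (hmeas 0).aemeasurable
          apply MLD.lintegral_inv_one_sub_lt_top (Measure.map (a 0) P) g β c'' η hβ hc''nn hη hηle
          · intro s hs
            rw [hpdf 0, withDensity_apply _ hs]
          · exact hgb
  -- identical distribution and pairwise independence
  have hident : ∀ i, IdentDistrib (X i) (X 0) P P := by
    intro i
    have hai : IdentDistrib (a i) (a 0) P P :=
      ⟨(hmeas i).aemeasurable, (hmeas 0).aemeasurable, (hpdf i).trans (hpdf 0).symm⟩
    exact hai.comp (measurable_const.sub measurable_id).inv
  have hpair : Pairwise (Function.onFun (IndepFun · · P) X) := by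
    intro i j hij
    have h1 : IndepFun (a i) (a j) P := hindep.indepFun hij
    exact h1.comp (measurable_const.sub measurable_id).inv
      (measurable_const.sub measurable_id).inv
  -- strong law of large numbers
  have hlln := ProbabilityTheory.strong_law_ae_real X hint hpair hident
  set m : ℝ := P[X 0] with hm
  have hmnn : 0 ≤ m := integral_nonneg (hXnn 0)
  set K : ℝ := m + 1 with hK
  have hKpos : 0 < K := by linarith
  set A : ℕ → Set Ω := fun n => {ω | ∑ i ∈ Finset.range n, X i ω ≤ K * n} with hA
  have hAmeas : ∀ n, MeasurableSet (A n) := by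
    intro n
    exact measurableSet_le (Finset.measurable_sum _ fun i _ => hXmeas i) measurable_const
  have hae : ∀ᵐ ω ∂P, ∀ᶠ n in atTop, ω ∈ A n := by
    filter_upwards [hlln] with ω hω
    have h1 : ∀ᶠ n : ℕ in atTop, (∑ i ∈ Finset.range n, X i ω) / n < K :=
      hω.eventually_lt_const (by linarith)
    filter_upwards [h1, eventually_ge_atTop 1] with n hn1 hn2
    have hnpos : (0:ℝ) < n := by exact_mod_cast hn2
    have := (div_lt_iff₀ hnpos).mp hn1
    simp only [hA, Set.mem_setOf_eq]
    linarith
  have htend : Tendsto (fun n => P (A n)) atTop (nhds 1) :=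
    MLD.measure_events_tendsto_one P A hAmeas hae
  -- constants
  set L : ℝ := |Real.log Δ| with hLdef
  have hlogneg : Real.log Δ < 0 := Real.log_neg hΔ hΔ'
  have hL : 0 < L := abs_pos.mpr (ne_of_lt hlogneg)
  have hLval : L = -Real.log Δ := abs_of_neg hlogneg
  refine ⟨1/16, K/(Δ*L) + 2/L, by norm_num, by positivity, ?_⟩
  -- squeeze
  have hsqrtlt : Real.sqrt Δ < 1 := by
    rw [show (1:ℝ) = Real.sqrt 1 by simp]
    exact Real.sqrt_lt_sqrt hΔ.le hΔ'
  have hev2 : ∀ᶠ n : ℕ in atTop, Real.sqrt Δ < 1 - 1/(n:ℝ) := by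
    have h0 : Tendsto (fun n : ℕ => 1 - 1/(n:ℝ)) atTop (nhds (1 - 0)) :=
      tendsto_const_nhds.sub tendsto_one_div_atTop_nhds_zero_nat
    rw [sub_zero] at h0
    exact h0.eventually_const_lt hsqrtlt
  have hincl : ∀ᶠ n : ℕ in atTop, A n ⊆
      {ω | 1/16 < (NΔ n ω : ℝ) / (|Real.log Δ| * n) ∧
           (NΔ n ω : ℝ) / (|Real.log Δ| * n) < K/(Δ*L) + 2/L} := by
    filter_upwards [eventually_ge_atTop 3, hev2] with n hn3 hnsqrt
    intro ω hωA
    have hn : 2 ≤ n := by omega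
    have hz0 : 0 < n := by omega
    set z : Fin n := ⟨0, hz0⟩ with hzdef
    set b : Fin n → ℝ := fun i => if (i:ℕ) = 0 then 1 else a (i:ℕ) ω with hb
    have hbnn : ∀ i, 0 ≤ b i := by
      intro i
      by_cases h : (i:ℕ) = 0
      · simp [hb, h]
      · simp only [hb, if_neg h]
        exact (hval i ω).1
    have hble : ∀ i, b i ≤ 1 := by
      intro i
      by_cases h : (i:ℕ) = 0
      · simp [hb, h]
      · simp only [hb, if_neg h]
        exact le_of_lt (hval i ω).2
    have hbz : b z = 1 := by simp [hb, hzdef]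
    have hblt : ∀ i, i ≠ z → b i < 1 := by
      intro i hi
      have h : (i:ℕ) ≠ 0 := by
        intro h
        exact hi (Fin.ext (by simp [hzdef, h]))
      simp only [hb, if_neg h]
      exact (hval i ω).2
    have hTb : T n ω = MLD.mtx n b := by
      ext i j
      rw [hT n ω i j]
      simp [MLD.mtx, hb]
    have hQq : ∀ N, Q n ω N = 1 - MLD.qv n b z N := by
      intro N
      rw [hQ n hn ω N, hTb]
      exact MLD.pvec_z hn b z N
    have hRv : MLD.Rv n b z ≤ K * n := by
      have h1 : MLD.Rv n b z = ∑ i ∈ Finset.univ.erase z, X (i:ℕ) ω := by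
        rw [MLD.Rv]
        apply Finset.sum_congr rfl
        intro i hi
        have hiz : (i:ℕ) ≠ 0 := by
          intro h
          exact (Finset.ne_of_mem_erase hi) (Fin.ext (by simp [hzdef, h]))
        simp [MLD.Rv, hb, hiz, hX]
      rw [h1]
      calc ∑ i ∈ Finset.univ.erase z, X (i:ℕ) ω
          ≤ ∑ i : Fin n, X (i:ℕ) ω :=
            Finset.sum_le_sum_of_subset_of_nonneg (Finset.erase_subset _ _)
              (fun i _ _ => hXnn i ω)
        _ = ∑ i ∈ Finset.range n, X i ω := Fin.sum_univ_eq_sum_range (fun i => X i ω) n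
        _ ≤ K * n := hωA
    have hqle : ∀ M : ℕ, MLD.qv n b z M ≤ K * n / (M+1) := by
      intro M
      have h3 : (0:ℝ) < (M:ℝ)+1 := by positivity
      calc MLD.qv n b z M ≤ MLD.Rv n b z / (M+1) := MLD.qv_le hn b z hbnn hble hbz hblt M
        _ ≤ K*n/(M+1) := (div_le_div_iff_of_pos_right h3).mpr hRv
    set S : Set ℕ := {N | ∀ M, N ≤ M → 1 - Δ ≤ Q n ω M} with hSdef
    have hNΔval : NΔ n ω = sInf S := hNΔ n ω
    have hnposR : (0:ℝ) < (n:ℝ) := by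
      have : (3:ℝ) ≤ (n:ℝ) := by exact_mod_cast hn3
      linarith
    set Nstar : ℕ := Nat.ceil (K*n/Δ) with hNstar
    have hmemS : Nstar ∈ S := by
      intro M hM
      rw [hQq M]
      have hM1 : (0:ℝ) < (M:ℝ)+1 := by positivity
      have h4 : K*n/Δ ≤ (M:ℝ) := le_trans (Nat.le_ceil _) (by exact_mod_cast hM)
      have h5 : K*n ≤ (M:ℝ)*Δ := (div_le_iff₀ hΔ).mp h4
      have h6 : MLD.qv n b z M ≤ Δ := by
        refine le_trans (hqle M) ?_
        rw [div_le_iff₀ hM1]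
        nlinarith
      linarith
    have hNΔle : NΔ n ω ≤ Nstar := by
      rw [hNΔval]
      exact Nat.sInf_le hmemS
    set N0 : ℕ := Nat.ceil (L*n/8) with hN0
    have hN0pos : 1 ≤ N0 := by
      rw [hN0]
      rw [Nat.one_le_iff_ne_zero, ← Nat.pos_iff_ne_zero, Nat.ceil_pos]
      positivity
    have hqbig : Δ < MLD.qv n b z (N0 - 1) := by
      set r : ℝ := 1 - 1/((n:ℝ)-1) with hr
      have hn3R : (3:ℝ) ≤ (n:ℝ) := by exact_mod_cast hn3
      have hn1pos : (0:ℝ) < (n:ℝ)-1 := by linarith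
      set x : ℝ := 1/((n:ℝ)-1) with hx
      have hx0 : 0 < x := by positivity
      have hxhalf : x ≤ 1/2 := by
        rw [hx, div_le_div_iff₀ hn1pos (by norm_num)]
        linarith
      have hrpos : 0 < r := by rw [hr]; linarith
      have hrle1 : r ≤ 1 := by rw [hr]; linarith
      have hexp : Real.exp (-(2*x)) ≤ r := by
        have h7 : 1 + 2*x ≤ Real.exp (2*x) := by
          have := Real.add_one_le_exp (2*x)
          linarith
        have h8 : Real.exp (-(2*x)) = (Real.exp (2*x))⁻¹ := Real.exp_neg _
        rw [h8]
        have h9 : (Real.exp (2*x))⁻¹ ≤ (1+2*x)⁻¹ :=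
          inv_anti₀ (by linarith) h7
        have h10 : (1+2*x)⁻¹ ≤ 1 - x := by
          rw [← one_div, div_le_iff₀ (by linarith : (0:ℝ) < 1+2*x)]
          nlinarith
        rw [hr]
        linarith
      have hlogr : -(2*x) ≤ Real.log r := by
        have := Real.log_le_log (Real.exp_pos _) hexp
        rwa [Real.log_exp] at this
      have hlogr0 : Real.log r ≤ 0 := Real.log_nonpos hrpos.le hrle1
      have hcast : ((N0 - 1 : ℕ) : ℝ) ≤ L*n/8 := by
        have h11 : (N0:ℝ) < L*n/8 + 1 := Nat.ceil_lt_add_one (by positivity)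
        have h12 : ((N0 - 1:ℕ):ℝ) = (N0:ℝ) - 1 := by
          rw [Nat.cast_sub hN0pos]
          simp
        rw [h12]
        linarith
      have hpow : Real.exp (-(L/2)) ≤ r ^ (N0 - 1 : ℕ) := by
        rw [← Real.exp_log hrpos, ← Real.exp_nat_mul]
        apply Real.exp_le_exp.mpr
        have h13 : ((N0-1:ℕ):ℝ) * Real.log r ≥ (L*n/8) * Real.log r :=
          mul_le_mul_of_nonpos_right hcast hlogr0
        have h14 : (L*n/8) * Real.log r ≥ (L*n/8) * (-(2*x)) :=
          mul_le_mul_of_nonneg_left hlogr (by positivity)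
        have h15 : -(L/2) ≤ (L*n/8) * (-(2*x)) := by
          rw [hx]
          have h16 : (L*n/8) * (-(2*(1/((n:ℝ)-1)))) = -(L*n/(4*((n:ℝ)-1))) := by
            field_simp
            ring
          rw [h16, neg_le_neg_iff, div_le_div_iff₀ (by positivity) (by norm_num)]
          nlinarith [mul_nonneg hL.le (show (0:ℝ) ≤ 2*(n:ℝ)-4 by linarith)]
        linarith
      have hsqrt : Real.exp (-(L/2)) = Real.sqrt Δ := by
        rw [hLval, show -(-Real.log Δ/2) = Real.log Δ / 2 by ring,
          ← Real.log_sqrt hΔ.le, Real.exp_log (Real.sqrt_pos.mpr hΔ)]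
      have h17 := MLD.qv_lower hn b z hbnn hble hbz (N0-1)
      have h18 : Real.sqrt Δ ≤ r ^ (N0-1:ℕ) := hsqrt ▸ hpow
      have hsp : 0 < Real.sqrt Δ := Real.sqrt_pos.mpr hΔ
      have h19 : Real.sqrt Δ * Real.sqrt Δ = Δ := Real.mul_self_sqrt hΔ.le
      have h20 : 0 < 1 - 1/(n:ℝ) := by
        have : 1/(n:ℝ) ≤ 1/3 := by
          rw [div_le_div_iff₀ hnposR (by norm_num)]
          linarith
        linarith
      have h21 : Δ < (1 - 1/(n:ℝ)) * r ^ (N0-1:ℕ) := by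
        calc Δ = Real.sqrt Δ * Real.sqrt Δ := h19.symm
          _ < (1 - 1/(n:ℝ)) * Real.sqrt Δ := by
              apply mul_lt_mul_of_pos_right hnsqrt hsp
          _ ≤ (1 - 1/(n:ℝ)) * r ^ (N0-1:ℕ) :=
              mul_le_mul_of_nonneg_left h18 h20.le
      linarith
    have hNΔge : N0 ≤ NΔ n ω := by
      rw [hNΔval]
      have hmem : sInf S ∈ S := Nat.sInf_mem (⟨Nstar, hmemS⟩ : S.Nonempty)
      by_contra hcon
      push_neg at hcon
      have h22 : sInf S ≤ N0 - 1 := by omega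
      have h23 := hmem (N0-1) h22
      rw [hQq] at h23
      linarith
    have hLn : (0:ℝ) < L * n := by positivity
    rw [Set.mem_setOf_eq, ← hLdef]
    constructor
    · rw [lt_div_iff₀ hLn]
      have h24 : L*n/8 ≤ (N0:ℝ) := Nat.le_ceil _
      have h25 : (N0:ℝ) ≤ (NΔ n ω : ℝ) := by exact_mod_cast hNΔge
      nlinarith
    · rw [div_lt_iff₀ hLn]
      have h26 : (NΔ n ω:ℝ) ≤ (Nstar:ℝ) := by exact_mod_cast hNΔle
      have h27 : (Nstar:ℝ) < K*n/Δ + 1 := Nat.ceil_lt_add_one (by positivity)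
      have h28 : (K/(Δ*L) + 2/L)*(L*n) = K*n/Δ + 2*n := by
        field_simp
      rw [h28]
      have h29 : (1:ℝ) ≤ (n:ℝ) := by
        have : (3:ℝ) ≤ (n:ℝ) := by exact_mod_cast hn3
        linarith
      linarith
  apply tendsto_of_tendsto_of_tendsto_of_le_of_le' htend tendsto_const_nhds
  · filter_upwards [hincl] with n hn
    exact measure_mono hn
  · exact Filter.Eventually.of_forall fun n => prob_le_one
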